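/- In a field of characteristic 3, the rational map u ↦ ((u^3 − a)^3 + a·u^3)/(u^3 − a)^2 applied to the x-coordinate u of a point P = (u, v) on the curve y^2 = x^3 + x^2 − a (with u^3 ≠ a) gives the x-coordinate of the point 3P under the elliptic curve group law. -/

import Mathlib

open WeierstrassCurve.Affine WeierstrassCurve.Affine.Point

open Classical in
/-- In characteristic 3, for an affine point `P = (u, v)` on
`y² = x³ + x² - a` with `u³ ≠ a`, the x-coordinate of `3P` is
`((u³ - a)³ + a·u³)/(u³ - a)²`. -/
theorem x_coordinate_of_three_smul
    (F : Type*) [Field F] [CharP F 3]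
    (a : F) (ha : a ≠ 0)
    (W : WeierstrassCurve F) (hW : W = ⟨0, 1, 0, 0, -a⟩)
    (u v : F) (hu : u ^ 3 ≠ a) (hP : W.toAffine.Nonsingular u v) :
    ∃ (x y : F) (h : W.toAffine.Nonsingular x y),
      3 • WeierstrassCurve.Affine.Point.some u v hP = WeierstrassCurve.Affine.Point.some x y h ∧
      x = ((u ^ 3 - a) ^ 3 + a * u ^ 3) / (u ^ 3 - a) ^ 2 := by
  subst hW
  have h3 : (3 : F) = 0 := CharP.cast_eq_zero F 3
  have heq : v ^ 2 = u ^ 3 + u ^ 2 - a := by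
    have h := (WeierstrassCurve.Affine.nonsingular_iff _ _).mp hP |>.1
    rw [WeierstrassCurve.Affine.equation_iff] at h
    linear_combination h
  have hsmul : (3 : ℕ) • Point.some u v hP = Point.some u v hP + Point.some u v hP + Point.some u v hP := by
    rw [show (3 : ℕ) = 2 + 1 from rfl, add_nsmul, two_nsmul, one_nsmul]
  by_cases hv : v = 0
  · -- 2P = 0, 3P = P
    subst hv
    have hy : (0 : F) = WeierstrassCurve.Affine.negY { a₁ := 0, a₂ := 1, a₃ := 0, a₄ := 0, a₆ := -a } u 0 := by
      simp [WeierstrassCurve.Affine.negY]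
    have hadd : Point.some u 0 hP + Point.some u 0 hP = 0 := add_self_of_Y_eq hy
    have hun : u ≠ 0 := fun h => ha (by simpa [h] using heq.symm)
    refine ⟨u, 0, hP, ?_, ?_⟩
    · rw [hsmul, hadd, zero_add]
    · have h1 : u ^ 3 - a = -u ^ 2 := by linear_combination -heq
      rw [h1]
      field_simp
      linear_combination -heq
  · have hne : a - u ^ 3 ≠ 0 := sub_ne_zero.mpr (Ne.symm hu)
    have h2 : (2 : F) ≠ 0 := by
      rw [show (2 : F) = -1 by linear_combination h3]
      exact neg_ne_zero.mpr one_ne_zero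
    have hy : v ≠ WeierstrassCurve.Affine.negY { a₁ := 0, a₂ := 1, a₃ := 0, a₄ := 0, a₆ := -a } u v := by
      simp only [WeierstrassCurve.Affine.negY]
      intro h
      exact hv (by linear_combination v * h3 - h)
    have h2P := WeierstrassCurve.Affine.nonsingular_add hP hP fun h => hy h.2
    have hd : v - (-v - 0 * u - 0) ≠ 0 := by
      intro h; exact hv (by linear_combination v * h3 - h)
    have hL : WeierstrassCurve.Affine.slope { a₁ := 0, a₂ := 1, a₃ := 0, a₄ := 0, a₆ := -a } u u v v = u / v := by
      rw [WeierstrassCurve.Affine.slope_of_Y_ne rfl hy]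
      simp only [WeierstrassCurve.Affine.negY]
      rw [div_eq_div_iff hd hv]
      linear_combination (u ^ 2 * v) * h3
    have hX2 : WeierstrassCurve.Affine.addX { a₁ := 0, a₂ := 1, a₃ := 0, a₄ := 0, a₆ := -a } u u (u / v)
        = (u ^ 4 - u * a + a) / v ^ 2 := by
      simp only [WeierstrassCurve.Affine.addX]
      field_simp [h2]
      linear_combination (-1 + u) * heq + (-u * v ^ 2) * h3
    have hY2 : WeierstrassCurve.Affine.addY { a₁ := 0, a₂ := 1, a₃ := 0, a₄ := 0, a₆ := -a } u u v (u / v)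
        = (u ^ 4 - u * a - v ^ 4) / v ^ 3 := by
      simp only [WeierstrassCurve.Affine.addY, WeierstrassCurve.Affine.negAddY,
        WeierstrassCurve.Affine.negY, WeierstrassCurve.Affine.addX]
      field_simp [h2]
      linear_combination u * heq + (u ^ 2 * v ^ 2) * h3
    have hAu : (u ^ 4 - u * a + a) / v ^ 2 ≠ u := by
      intro h
      apply hne
      rw [div_eq_iff (pow_ne_zero 2 hv)] at h
      linear_combination h + u * heq
    have hx2u : WeierstrassCurve.Affine.addX { a₁ := 0, a₂ := 1, a₃ := 0, a₄ := 0, a₆ := -a }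
        u u (WeierstrassCurve.Affine.slope { a₁ := 0, a₂ := 1, a₃ := 0, a₄ := 0, a₆ := -a } u u v v) ≠ u := by
      rw [hL, hX2]; exact hAu
    have h3P := WeierstrassCurve.Affine.nonsingular_add h2P hP fun h => (hx2u h.1).elim
    refine ⟨_, _, h3P, ?_, ?_⟩
    · rw [hsmul, WeierstrassCurve.Affine.Point.add_self_of_Y_ne hy,
        WeierstrassCurve.Affine.Point.add_of_X_ne hx2u]
    · rw [hL, hX2, hY2, WeierstrassCurve.Affine.slope_of_X_ne hAu]
      simp only [WeierstrassCurve.Affine.addX]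
      have hne' : u ^ 3 - a ≠ 0 := sub_ne_zero.mpr hu
      have e1 : (u ^ 4 - u * a + a) / v ^ 2 - u = (a - u ^ 3) / v ^ 2 := by
        field_simp [h2]
        linear_combination (-u) * heq
      have e2 : (u ^ 4 - u * a - v ^ 4) / v ^ 3 - v = (u ^ 4 - u * a + v ^ 4) / v ^ 3 := by
        field_simp [h2]
        linear_combination (-v ^ 4) * h3
      rw [e1, e2, div_div_div_eq]
      rw [show v ^ 3 * (a - u ^ 3) = (v * (a - u ^ 3)) * v ^ 2 by ring, mul_div_mul_right _ _ (pow_ne_zero 2 hv)]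
      field_simp [h2, hne, hne']
      linear_combination ((-1)*a^4 + (1)*v^2*a^4 + (-1)*v^4*a^3 + (1)*v^6*a^2 + (1)*u^1*a^4 + (-2)*u^1*v^2*a^3 + (3)*u^2*a^4 + (-2)*u^2*v^2*a^3 + (1)*u^2*v^4*a^2 + (1)*u^3*a^3 + (-4)*u^3*v^2*a^3 + (3)*u^3*v^4*a^2 + (-2)*u^3*v^6*a^1 + (-7)*u^4*a^3 + (7)*u^4*v^2*a^2 + (-12)*u^5*a^3 + (6)*u^5*v^2*a^2 + (-2)*u^5*v^4*a^1 + (3)*u^6*a^2 + (6)*u^6*v^2*a^2 + (-3)*u^6*v^4*a^1 + (1)*u^6*v^6 + (15)*u^7*a^2 + (-8)*u^7*v^2*a^1 + (18)*u^8*a^2 + (-6)*u^8*v^2*a^1 + (1)*u^8*v^4 + (-5)*u^9*a^1 + (-4)*u^9*v^2*a^1 + (1)*u^9*v^4 + (-13)*u^10*a^1 + (3)*u^10*v^2 + (-12)*u^11*a^1 + (2)*u^11*v^2 + (2)*u^12 + (1)*u^12*v^2 + (4)*u^13 + (3)*u^14) * heq + ((-1)*u^2*a^5 + (1)*u^3*a^4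 + (2)*u^4*a^4 + (-1)*u^5*a^3 + (5)*u^5*a^4 + (-5)*u^6*a^3 + (-8)*u^7*a^3 + (3)*u^8*a^2 + (-10)*u^8*a^3 + (9)*u^9*a^2 + (12)*u^10*a^2 + (-3)*u^11*a^1 + (10)*u^11*a^2 + (-7)*u^12*a^1 + (-8)*u^13*a^1 + (1)*u^14 + (-5)*u^14*a^1 + (2)*u^15 + (2)*u^16 + (1)*u^17) * h3
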